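/- arXiv:2407.15001 — 2 statements merged into one kernel-verified Lean document; each statement's English description precedes it below -/
import Mathlib

section
/- Let c ∈ ℝ and r > 0 be such that |α_i + k − c| < r for every i ∈ {1,…,p} and k ∈ {0,…,n_i−1}. Suppose q is a complex polynomial of degree at most |n⃗| − 1 such that (2πi)^{−1} ∮_{|t−c|=r} q(t) h(t) / ∏_{i=1}^p (α_i − t)_{n_i} dt = 0 for every complex polynomial h of degree at most |n⃗| − 2. Then q is a constant polynomial. -/
open Finset

/-- The Pochhammer symbol (rising factorial) `(a)_m` for a complex number `a`. -/
noncomputable def pochC (a : ℂ) (m : ℕ) : ℂ := (ascPochhammer ℂ m).eval a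

open Metric Real Complex Polynomial

lemma pochC_eq_prod (a : ℂ) (m : ℕ) : pochC a m = ∏ j ∈ Finset.range m, (a + j) := by
  induction m with
  | zero => simp [pochC]
  | succ k ih =>
    rw [pochC, ascPochhammer_succ_eval, ← pochC, ih, Finset.prod_range_succ]

lemma mem_ball_sub_ne_zero {c w t : ℂ} {r : ℝ} (hw : w ∈ ball c r) (ht : t ∈ sphere c r) :
    w - t ≠ 0 := by
  refine sub_ne_zero.mpr ?_
  intro h; subst h
  rw [mem_sphere] at ht
  rw [mem_ball, ht] at hw
  exact lt_irrefl _ hw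

lemma circleIntegral_poly_div (g : Polynomial ℂ) {c w : ℂ} {r : ℝ} (hw : w ∈ ball c r) :
    (∮ t in C(c, r), g.eval t / (w - t)) = -(2 * π * Complex.I * g.eval w) := by
  have hr : (0:ℝ) ≤ r := le_of_lt (lt_of_le_of_lt dist_nonneg hw)
  have h1 : (∮ t in C(c, r), (t - w)⁻¹ • g.eval t) = (2 * π * Complex.I : ℂ) • g.eval w :=
    DiffContOnCl.circleIntegral_sub_inv_smul (g.differentiable.diffContOnCl) hw
  have heq : Set.EqOn (fun t : ℂ => g.eval t / (w - t))
      (fun t : ℂ => (-1 : ℂ) * ((t - w)⁻¹ • g.eval t)) (sphere c r) := by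
    intro t ht
    have h2 : w - t ≠ 0 := mem_ball_sub_ne_zero hw ht
    have h3 : t - w ≠ 0 := fun h => h2 (by rw [← neg_sub] at h; simpa using neg_eq_zero.mp h)
    simp only [smul_eq_mul]
    field_simp
    ring
  rw [circleIntegral.integral_congr hr heq, circleIntegral.integral_const_mul, h1]
  simp only [smul_eq_mul]
  ring

lemma circleIntegrable_poly_div (g : Polynomial ℂ) {c w : ℂ} {r : ℝ} (hr : 0 ≤ r)
    (hw : w ∈ ball c r) : CircleIntegrable (fun t => g.eval t / (w - t)) c r := by
  refine ContinuousOn.circleIntegrable hr ?_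
  exact (g.continuous.continuousOn).div
    ((continuous_const.sub continuous_id).continuousOn)
    (fun t ht => mem_ball_sub_ne_zero hw ht)

lemma circleIntegral_poly_div_two (g : Polynomial ℂ) {c ρ ρ' : ℂ} {r : ℝ}
    (hρ : ρ ∈ ball c r) (hρ' : ρ' ∈ ball c r) (hne : ρ ≠ ρ') :
    (∮ t in C(c, r), g.eval t / ((ρ - t) * (ρ' - t)))
      = 2 * π * Complex.I * ((g.eval ρ' - g.eval ρ) / (ρ' - ρ)) := by
  have hr : (0:ℝ) ≤ r := le_of_lt (lt_of_le_of_lt dist_nonneg hρ)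
  have hρρ' : ρ' - ρ ≠ 0 := sub_ne_zero.mpr (Ne.symm hne)
  have heq : Set.EqOn (fun t : ℂ => g.eval t / ((ρ - t) * (ρ' - t)))
      (fun t : ℂ => (ρ' - ρ)⁻¹ * (g.eval t / (ρ - t) - g.eval t / (ρ' - t)))
      (sphere c r) := by
    intro t ht
    have h1 : ρ - t ≠ 0 := mem_ball_sub_ne_zero hρ ht
    have h2 : ρ' - t ≠ 0 := mem_ball_sub_ne_zero hρ' ht
    simp only
    field_simp
    ring
  rw [circleIntegral.integral_congr hr heq, circleIntegral.integral_const_mul,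
    circleIntegral.integral_sub (circleIntegrable_poly_div g hr hρ)
      (circleIntegrable_poly_div g hr hρ'),
    circleIntegral_poly_div g hρ, circleIntegral_poly_div g hρ']
  field_simp
  ring

/-- If a polynomial `q` of degree at most `|n|−1` annihilates, under the contour
integral against `1/∏ (α_i − t)_{n_i}`, every polynomial of degree at most `|n|−2`,
then `q` is a constant polynomial. -/
theorem contour_orthogonality_implies_constant
    (p : ℕ) (hp : 0 < p) (n : Fin p → ℕ) (hn : ∀ i, 0 < n i)
    (S : ℕ) (hS : S = ∑ i, n i)
    (α : Fin p → ℝ) (hα : ∀ i, -1 < α i)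
    (hαint : ∀ i j, i ≠ j → ∀ z : ℤ, α i - α j ≠ (z : ℝ))
    (c r : ℝ) (hr : 0 < r)
    (henc : ∀ i, ∀ k < n i, |α i + k - c| < r)
    (q : Polynomial ℂ) (hq : q.natDegree ≤ S - 1)
    (horth : ∀ h : Polynomial ℂ, h.natDegree ≤ S - 2 →
      (2 * Real.pi * Complex.I)⁻¹ *
        circleIntegral
          (fun t : ℂ => q.eval t * h.eval t / ∏ i, pochC ((α i : ℂ) - t) (n i))
          (c : ℂ) r = 0) :
    ∃ a : ℂ, q = Polynomial.C a := by
  classical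
  set T := (i : Fin p) × Fin (n i) with hT
  have hcardT : Fintype.card T = S := by
    simp [hT, hS]
  let root : T → ℂ := fun s => (α s.1 : ℂ) + (s.2 : ℕ)
  have hmem : ∀ s : T, root s ∈ ball (c : ℂ) r := by
    rintro ⟨i, j⟩
    rw [mem_ball, Complex.dist_eq]
    have h1 : ((α i : ℂ) + (j : ℕ) - (c : ℂ)) = ((α i + (j : ℕ) - c : ℝ) : ℂ) := by
      push_cast; ring
    rw [show root ⟨i, j⟩ = (α i : ℂ) + (j : ℕ) from rfl, h1, Complex.norm_real, Real.norm_eq_abs]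
    exact henc i j j.isLt
  have hinj : Function.Injective root := by
    rintro ⟨i, j⟩ ⟨i', j'⟩ h
    have hre : α i + ((j : ℕ) : ℝ) = α i' + ((j' : ℕ) : ℝ) := by
      have := congrArg Complex.re h
      simpa [root] using this
    rcases eq_or_ne i i' with rfl | hii
    · have hjj : ((j : ℕ) : ℝ) = ((j' : ℕ) : ℝ) := by linarith
      have : (j : ℕ) = (j' : ℕ) := by exact_mod_cast hjj
      exact congrArg (Sigma.mk i) (Fin.ext this)
    · exact absurd (by push_cast; linarith : α i - α i' = (((j' : ℕ) : ℤ) - ((j : ℕ) : ℤ) : ℤ))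
        (hαint i i' hii _)
  have hroot_ne : ∀ t ∈ sphere (c : ℂ) r, ∀ s : T, root s - t ≠ 0 :=
    fun t ht s => mem_ball_sub_ne_zero (hmem s) ht
  have hD : ∀ t : ℂ, (∏ i, pochC ((α i : ℂ) - t) (n i)) = ∏ s : T, (root s - t) := by
    intro t
    rw [← Finset.univ_sigma_univ, Finset.prod_sigma]
    refine Finset.prod_congr rfl fun i _ => ?_
    rw [pochC_eq_prod, ← Fin.prod_univ_eq_prod_range]
    refine Finset.prod_congr rfl fun j _ => ?_
    show (α i : ℂ) - t + (j : ℕ) = (α i : ℂ) + (j : ℕ) - t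
    ring
  have hSpos : 0 < S := by
    rw [hS]
    exact Finset.sum_pos (fun i _ => hn i) ⟨⟨0, hp⟩, Finset.mem_univ _⟩
  -- key step: q takes the same value at all the roots
  have hkey : ∀ s s' : T, q.eval (root s) = q.eval (root s') := by
    intro s s'
    rcases eq_or_ne s s' with rfl | hne'
    · rfl
    have hρne : root s ≠ root s' := fun e => hne' (hinj e)
    have hs'mem : s' ∈ Finset.univ.erase s := Finset.mem_erase.mpr ⟨Ne.symm hne', Finset.mem_univ _⟩
    set E : Finset T := (Finset.univ.erase s).erase s' with hE
    have hcardE : E.card = S - 2 := by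
      rw [hE, Finset.card_erase_of_mem hs'mem, Finset.card_erase_of_mem (Finset.mem_univ s),
        Finset.card_univ, hcardT]
      omega
    set h : Polynomial ℂ := ∏ u ∈ E, (Polynomial.C (root u) - Polynomial.X) with hh
    have hdeg : h.natDegree ≤ S - 2 := by
      have h1 : h.natDegree ≤ ∑ u ∈ E, (Polynomial.C (root u) - Polynomial.X).natDegree :=
        Polynomial.natDegree_prod_le _ _
      have h2 : ∀ u ∈ E, (Polynomial.C (root u) - Polynomial.X).natDegree ≤ 1 := fun u _ =>
        le_trans (Polynomial.natDegree_sub_le _ _) (by simp)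
      calc h.natDegree ≤ ∑ _u ∈ E, 1 := h1.trans (Finset.sum_le_sum h2)
        _ = S - 2 := by rw [Finset.sum_const, smul_eq_mul, mul_one, hcardE]
    have horth' := horth h hdeg
    have hEq : Set.EqOn
        (fun t : ℂ => q.eval t * h.eval t / ∏ i, pochC ((α i : ℂ) - t) (n i))
        (fun t : ℂ => q.eval t / ((root s - t) * (root s' - t))) (sphere (c : ℂ) r) := by
      intro t ht
      have hsplit : (∏ u : T, (root u - t))
          = (root s - t) * ((root s' - t) * ∏ u ∈ E, (root u - t)) := by
        rw [← Finset.mul_prod_erase _ _ (Finset.mem_univ s),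
          ← Finset.mul_prod_erase _ _ hs'mem]
      have hhe : h.eval t = ∏ u ∈ E, (root u - t) := by
        simp [hh, Polynomial.eval_prod]
      have hP : (∏ u ∈ E, (root u - t)) ≠ 0 :=
        Finset.prod_ne_zero_iff.mpr fun u _ => hroot_ne t ht u
      have h1 := hroot_ne t ht s
      have h2 := hroot_ne t ht s'
      simp only
      rw [hD t, hsplit, hhe]
      field_simp
    rw [show circleIntegral
          (fun t : ℂ => q.eval t * h.eval t / ∏ i, pochC ((α i : ℂ) - t) (n i)) (c : ℂ) r
        = ∮ t in C((c : ℂ), r),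
            q.eval t / ((root s - t) * (root s' - t)) from
      circleIntegral.integral_congr hr.le hEq,
      circleIntegral_poly_div_two q (hmem s) (hmem s') hρne] at horth'
    have h2pi : (2 * (π : ℂ) * Complex.I) ≠ 0 := by
      simp [Real.pi_ne_zero, Complex.I_ne_zero, Complex.ofReal_ne_zero]
    have hρρ' : root s' - root s ≠ 0 := sub_ne_zero.mpr (Ne.symm hρne)
    have := horth'
    field_simp at this
    linear_combination -this
  -- conclude
  have hT0 : T := ⟨⟨0, hp⟩, ⟨0, hn _⟩⟩
  refine ⟨q.eval (root hT0), ?_⟩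
  have hz : q - Polynomial.C (q.eval (root hT0)) = 0 := by
    refine Polynomial.eq_zero_of_natDegree_lt_card_of_eval_eq_zero _ hinj
      (fun s => ?_) ?_
    · simp [hkey s hT0]
    · rw [hcardT]
      have hdq : (q - Polynomial.C (q.eval (root hT0))).natDegree ≤ S - 1 :=
        le_trans (Polynomial.natDegree_sub_le _ _) (max_le hq (by simp))
      omega
  have := sub_eq_zero.mp hz
  exact this
end

section
/- Let L be a monic real polynomial of degree |n⃗| satisfying the type II Laguerre orthogonality conditions: ∫_0^∞ x^j L(x) x^{α_i} e^{−x} dx = 0 for every i ∈ {1,…,p} and every j ∈ {0,…,n_i−1}. Then for every real x: L(x) e^{−x} = (−1)^{|n⃗|} [∏_{q=1}^p (α_q+1)_{n_q}] · ∑_{l=0}^∞ [∏_{q=1}^p (α_q+n_q+1)_l/(α_q+1)_l] · (−x)^l/l!, where the series on the right converges absolutely. -/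
open Finset MeasureTheory

/-- The Pochhammer symbol (rising factorial) `(a)_m` for a real number `a`. -/
noncomputable def poch (a : ℝ) (m : ℕ) : ℝ := (ascPochhammer ℝ m).eval a

lemma poch_zero (a : ℝ) : poch a 0 = 1 := by simp [poch]

lemma poch_succ (a : ℝ) (k : ℕ) : poch a (k + 1) = poch a k * (a + k) :=
  ascPochhammer_succ_eval k a

lemma poch_pos {a : ℝ} (ha : 0 < a) (k : ℕ) : 0 < poch a k := by
  induction k with
  | zero => simp [poch_zero]
  | succ k ih => rw [poch_succ]; positivity

lemma poch_prod (a : ℝ) (m : ℕ) : poch a m = ∏ j ∈ range m, (a + j) := by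
  induction m with
  | zero => simp [poch_zero]
  | succ m ih => rw [poch_succ, prod_range_succ, ih]

lemma poch_add (a : ℝ) (m k : ℕ) : poch a (m + k) = poch a m * poch (a + m) k := by
  have := congrArg (Polynomial.eval a) (ascPochhammer_mul ℝ m k)
  simpa [poch, Polynomial.eval_comp] using this.symm

lemma poch_neg_nat (l k : ℕ) : poch (-(l : ℝ)) k = (-1) ^ k * (l.descFactorial k : ℝ) := by
  rw [poch, ascPochhammer_eval_neg_eq_descPochhammer,
    descPochhammer_eval_eq_descFactorial]

lemma poch_ratio {a : ℝ} (ha : 0 < a) (m l : ℕ) :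
    poch (a + m) l / poch a l = poch (a + l) m / poch a m := by
  have h1 : poch a (m + l) = poch a m * poch (a + m) l := poch_add a m l
  have h2 : poch a (l + m) = poch a l * poch (a + l) m := poch_add a l m
  rw [add_comm] at h1
  have h := h1.symm.trans h2
  rw [div_eq_div_iff (poch_pos ha l).ne' (poch_pos ha m).ne']
  linarith [h]

lemma Gamma_poch {t : ℝ} (ht : 0 < t) (k : ℕ) :
    Real.Gamma (t + k) = poch t k * Real.Gamma t := by
  induction k with
  | zero => simp [poch_zero]
  | succ k ih =>
    have h : t + ((k : ℝ) + 1) = (t + k) + 1 := by ring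
    rw [Nat.cast_succ, h, Real.Gamma_add_one (by positivity), ih, poch_succ]
    ring

lemma integral_moment {α : ℝ} (hα : -1 < α) (L : Polynomial ℝ) (j : ℕ) :
    ∫ x in Set.Ioi (0 : ℝ), x ^ j * L.eval x * x ^ α * Real.exp (-x)
      = ∑ k ∈ range (L.natDegree + 1),
          L.coeff k * (poch (α + j + 1) k * Real.Gamma (α + j + 1)) := by
  have h0 : ∀ k : ℕ, (0 : ℝ) < α + j + 1 + k := by
    intro k
    have : (0:ℝ) ≤ j := Nat.cast_nonneg j
    have : (0:ℝ) ≤ k := Nat.cast_nonneg k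
    linarith [Nat.cast_nonneg (α := ℝ) j]
  have hpt : ∀ x ∈ Set.Ioi (0 : ℝ),
      x ^ j * L.eval x * x ^ α * Real.exp (-x)
        = ∑ k ∈ range (L.natDegree + 1),
            L.coeff k * (Real.exp (-x) * x ^ (α + j + 1 + k - 1)) := by
    intro x hx
    have hx : (0:ℝ) < x := hx
    rw [Polynomial.eval_eq_sum_range, Finset.mul_sum, Finset.sum_mul, Finset.sum_mul]
    refine Finset.sum_congr rfl fun k _ => ?_
    have he : α + j + 1 + k - 1 = α + ((j + k : ℕ) : ℝ) := by push_cast; ring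
    rw [he, Real.rpow_add hx, Real.rpow_natCast, pow_add]
    ring
  rw [setIntegral_congr_fun measurableSet_Ioi hpt]
  rw [MeasureTheory.integral_finset_sum]
  · refine Finset.sum_congr rfl fun k _ => ?_
    rw [integral_const_mul, ← Real.Gamma_eq_integral (h0 k),
      ← Gamma_poch (by linarith [h0 0] : (0:ℝ) < α + j + 1)]
  · intro k _
    exact (Real.GammaIntegral_convergent (h0 k)).const_mul _

open Polynomial

/-- Hypergeometric series representation of the weighted type II Laguerre (first kind)
multiple orthogonal polynomial:
`L(x) e^{−x} = (−1)^{|n|} ∏ (α_q+1)_{n_q} · ∑_l ∏ (α_q+n_q+1)_l/(α_q+1)_l · (−x)^l/l!`,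
with the series converging absolutely. -/
theorem laguerreI_typeII_series
    (p : ℕ) (hp : 0 < p) (n : Fin p → ℕ) (hn : ∀ i, 0 < n i)
    (S : ℕ) (hS : S = ∑ i, n i)
    (α : Fin p → ℝ) (hα : ∀ i, -1 < α i)
    (hαint : ∀ i j, i ≠ j → ∀ z : ℤ, α i - α j ≠ (z : ℝ))
    (L : Polynomial ℝ) (hmonic : L.Monic) (hdeg : L.natDegree = S)
    (horth : ∀ i, ∀ j < n i,
      ∫ x in Set.Ioi (0 : ℝ), x ^ j * L.eval x * x ^ α i * Real.exp (-x) = 0) :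
    ∀ x : ℝ,
      Summable (fun l : ℕ =>
        |(∏ q, poch (α q + n q + 1) l / poch (α q + 1) l) * (-x) ^ l /
          (Nat.factorial l : ℝ)|) ∧
      L.eval x * Real.exp (-x) =
        (-1 : ℝ) ^ S * (∏ q, poch (α q + 1) (n q)) *
          ∑' l : ℕ,
            (∏ q, poch (α q + n q + 1) l / poch (α q + 1) l) * (-x) ^ l /
              (Nat.factorial l : ℝ) := by
  have hα1 : ∀ q, (0:ℝ) < α q + 1 := fun q => by linarith [hα q]
  set W : Polynomial ℝ := ∏ q, ∏ j ∈ range (n q), (X - C (α q + j)) with hWdef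
  set T : Polynomial ℝ :=
    ∑ k ∈ range (S+1), C (L.coeff k) * (ascPochhammer ℝ k).comp (X + C 1) with hTdef
  have hTeval : ∀ t : ℝ, T.eval t = ∑ k ∈ range (S+1), L.coeff k * poch (t+1) k := by
    intro t
    simp [hTdef, eval_finset_sum, poch]
  -- roots of T
  have key : ∀ i : Fin p, ∀ j, j < n i → T.eval (α i + j) = 0 := by
    intro i j hj
    have h := horth i j hj
    rw [integral_moment (hα i) L j, hdeg] at h
    have hpos : (0:ℝ) < α i + j + 1 := by
      have : (0:ℝ) ≤ (j:ℝ) := Nat.cast_nonneg j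
      linarith [hα i]
    have hG : 0 < Real.Gamma (α i + j + 1) := Real.Gamma_pos_of_pos hpos
    have h2 : (∑ k ∈ range (S+1), L.coeff k * poch (α i + j + 1) k)
        * Real.Gamma (α i + j + 1) = 0 := by
      rw [Finset.sum_mul, ← h]
      exact Finset.sum_congr rfl fun k _ => by ring
    rw [hTeval]
    exact (mul_eq_zero.mp h2).resolve_right hG.ne'
  -- W is monic of degree S
  have hWmonic : W.Monic :=
    monic_prod_of_monic _ _ fun q _ =>
      monic_prod_of_monic _ _ fun j _ => monic_X_sub_C _
  have hWdeg : W.natDegree = S := by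
    rw [hS, hWdef, natDegree_prod_of_monic _ _
      (fun q _ => monic_prod_of_monic _ _ fun j _ => monic_X_sub_C _)]
    refine Finset.sum_congr rfl fun q _ => ?_
    rw [natDegree_prod_of_monic _ _ (fun j _ => monic_X_sub_C _),
      Finset.sum_congr rfl (fun j _ => natDegree_X_sub_C _), Finset.sum_const,
      card_range, smul_eq_mul, mul_one]
  have hcomp : ∀ k : ℕ, ((ascPochhammer ℝ k).comp (X + C 1)).Monic :=
    fun k => (monic_ascPochhammer ℝ k).comp_X_add_C 1
  have hcompdeg : ∀ k : ℕ, ((ascPochhammer ℝ k).comp (X + C 1)).natDegree = k := by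
    intro k
    rw [natDegree_comp, ascPochhammer_natDegree, natDegree_X_add_C, mul_one]
  have hterm0 : ∀ k m : ℕ, k < m →
      (C (L.coeff k) * (ascPochhammer ℝ k).comp (X + C 1)).coeff m = 0 := by
    intro k m hkm
    rw [coeff_C_mul, coeff_eq_zero_of_natDegree_lt
      (p := (ascPochhammer ℝ k).comp (X + C 1)) (by rw [hcompdeg]; exact hkm), mul_zero]
  have hTcoeff : ∀ m : ℕ, S ≤ m → T.coeff m = if m = S then 1 else 0 := by
    intro m hm
    rw [hTdef, finset_sum_coeff]
    by_cases hmS : m = S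
    · subst hmS
      rw [if_pos rfl]
      rw [Finset.sum_eq_single m (fun k hk hkm => hterm0 k m (by simp at hk; omega))
        (fun h => absurd (self_mem_range_succ m) h)]
      rw [coeff_C_mul]
      have h1 : ((ascPochhammer ℝ m).comp (X + C 1)).coeff m = 1 := by
        have h2 := (hcomp m).coeff_natDegree
        rwa [hcompdeg m] at h2
      rw [h1, mul_one, ← hdeg, hmonic.coeff_natDegree]
    · rw [if_neg hmS]
      exact Finset.sum_eq_zero fun k hk => hterm0 k m (by simp at hk; omega)
  have hTdegle : T.natDegree ≤ S :=
    natDegree_le_iff_coeff_eq_zero.mpr fun m hm => by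
      rw [hTcoeff m hm.le, if_neg (by omega)]
  have hf : Function.Injective (fun s : (Σ i : Fin p, Fin (n i)) => α s.1 + ((s.2 : ℕ) : ℝ)) := by
    rintro ⟨i, j⟩ ⟨i', j'⟩ h
    simp only at h
    by_cases hii : i = i'
    · subst hii
      have h1 : ((j : ℕ) : ℝ) = ((j' : ℕ) : ℝ) := by linarith
      have h2 : (j : ℕ) = (j' : ℕ) := Nat.cast_injective h1
      exact Sigma.ext rfl (heq_of_eq (Fin.ext h2))
    · exact absurd (by push_cast; linarith :
        α i - α i' = (((j' : ℕ) : ℤ) - ((j : ℕ) : ℤ) : ℤ)) (hαint i i' hii _)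
  have hcard : Fintype.card (Σ i : Fin p, Fin (n i)) = S := by
    rw [hS]; simp
  have heval : ∀ s : (Σ i : Fin p, Fin (n i)), (T - W).eval (α s.1 + ((s.2 : ℕ) : ℝ)) = 0 := by
    rintro ⟨i, j⟩
    rw [eval_sub, key i j j.isLt, hWdef, eval_prod, zero_sub, neg_eq_zero]
    refine Finset.prod_eq_zero (mem_univ i) ?_
    rw [eval_prod]
    refine Finset.prod_eq_zero (mem_range.mpr j.isLt) ?_
    simp
  have hTW : T = W := by
    by_contra hne
    have hD0 : T - W ≠ 0 := sub_ne_zero.mpr hne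
    have hcS : (T - W).coeff S = 0 := by
      rw [coeff_sub, hTcoeff S le_rfl, if_pos rfl]
      have := hWmonic.coeff_natDegree
      rw [hWdeg] at this
      rw [this, sub_self]
    have hdlt : (T - W).natDegree < S := by
      have hle : (T - W).natDegree ≤ S :=
        le_trans (natDegree_sub_le _ _) (max_le hTdegle (le_of_eq hWdeg))
      rcases lt_or_eq_of_le hle with h | h
      · exact h
      · exfalso
        apply mt leadingCoeff_eq_zero.mp hD0
        rw [leadingCoeff, h, hcS]
    exact hD0 (Polynomial.eq_zero_of_natDegree_lt_card_of_eval_eq_zero _ hf heval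
      (by rw [hcard]; exact hdlt))
  set P : ℕ → ℝ := fun l => ∏ q, poch (α q + 1 + l) (n q) with hPdef
  have master : ∀ l : ℕ,
      ∑ k ∈ range (S+1), L.coeff k * ((-1:ℝ)^k * (l.descFactorial k : ℝ))
        = (-1:ℝ)^S * P l := by
    intro l
    have h := congrArg (eval (-(l:ℝ) - 1)) hTW
    rw [hTeval] at h
    simp only [show (-(l:ℝ) - 1 + 1) = -(l:ℝ) from by ring, poch_neg_nat] at h
    have hq : ∀ q : Fin p, eval (-(l:ℝ)-1) (∏ j ∈ range (n q), (X - C (α q + j)))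
        = (-1:ℝ)^(n q) * poch (α q + 1 + l) (n q) := by
      intro q
      rw [eval_prod, poch_prod,
        Finset.prod_congr rfl (fun j (_ : j ∈ range (n q)) =>
          (by simp; ring : eval (-(l:ℝ)-1) (X - C (α q + j)) = (-1) * (α q + 1 + l + j))),
        prod_mul_distrib, prod_const, card_range]
    rw [hWdef, eval_prod, Finset.prod_congr rfl (fun q _ => hq q), prod_mul_distrib,
      prod_pow_eq_pow_sum, ← hS] at h
    exact h
  have master' : ∀ l : ℕ,
      ∑ k ∈ range (l+1), L.coeff k * ((-1:ℝ)^k * (l.descFactorial k : ℝ))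
        = (-1:ℝ)^S * P l := by
    intro l
    rw [← master l]
    rcases le_total l S with hls | hls
    · apply Finset.sum_subset (by intro k hk; simp at hk ⊢; omega)
      intro k hk hk'
      have hlk : l < k := by simp at hk hk'; omega
      rw [Nat.descFactorial_eq_zero_iff_lt.mpr hlk]
      simp
    · symm
      apply Finset.sum_subset (by intro k hk; simp at hk ⊢; omega)
      intro k hk hk'
      have hk2 : S < k := by simp at hk hk'; omega
      rw [coeff_eq_zero_of_natDegree_lt (by rw [hdeg]; exact hk2)]
      simp
  have hKpos : (0:ℝ) < ∏ q, poch (α q + 1) (n q) :=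
    Finset.prod_pos fun q _ => poch_pos (hα1 q) _
  have hratio : ∀ l : ℕ, (∏ q, poch (α q + (n q : ℝ) + 1) l / poch (α q + 1) l)
      = P l / ∏ q, poch (α q + 1) (n q) := by
    intro l
    rw [← Finset.prod_div_distrib]
    refine Finset.prod_congr rfl fun q _ => ?_
    have h := poch_ratio (hα1 q) (n q) l
    rw [show α q + 1 + (n q : ℝ) = α q + (n q : ℝ) + 1 by ring] at h
    exact h
  intro x
  set f : ℕ → ℝ := fun i => L.coeff i * x ^ i with hfdef
  set g : ℕ → ℝ := fun j => (-x) ^ j / (Nat.factorial j : ℝ) with hgdef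
  have hfs : Summable fun i => ‖f i‖ := by
    apply summable_of_ne_finset_zero (s := range (S+1))
    intro i hi
    simp only [hfdef]
    rw [coeff_eq_zero_of_natDegree_lt (by rw [hdeg]; simp at hi; omega), zero_mul, norm_zero]
  have hgs : Summable fun j => ‖g j‖ := by
    refine (Real.summable_pow_div_factorial |x|).congr fun j => ?_
    simp only [hgdef]
    rw [norm_div, norm_pow, norm_neg, Real.norm_eq_abs, Real.norm_natCast]
  have htsumf : ∑' i, f i = L.eval x := by
    rw [tsum_eq_sum (s := range (S+1)) (fun i hi => by
      simp only [hfdef]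
      rw [coeff_eq_zero_of_natDegree_lt (by rw [hdeg]; simp at hi; omega), zero_mul])]
    rw [Polynomial.eval_eq_sum_range, hdeg]
  have htsumg : ∑' j, g j = Real.exp (-x) := by
    rw [Real.exp_eq_exp_ℝ, NormedSpace.exp_eq_tsum_div]
  have hA : ∀ l : ℕ, ∑ kl ∈ antidiagonal l, f kl.1 * g kl.2
      = ((-1:ℝ)^S * P l) * ((-1)^l * x^l / (Nat.factorial l : ℝ)) := by
    intro l
    rw [Finset.Nat.sum_antidiagonal_eq_sum_range_succ_mk, ← master' l, Finset.sum_mul]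
    refine Finset.sum_congr rfl fun k hk => ?_
    have hk' : k ≤ l := by simp at hk; omega
    simp only [hfdef, hgdef]
    have hfac : ((l - k).factorial : ℝ) * (l.descFactorial k : ℝ) = (l.factorial : ℝ) := by
      exact_mod_cast congrArg (Nat.cast : ℕ → ℝ) (Nat.factorial_mul_descFactorial hk')
    have hsign : (-1:ℝ)^(l-k) = (-1)^l * (-1)^k := by
      have h1 : (-1:ℝ)^(l-k) * (-1)^k = (-1)^l := by
        rw [← pow_add, Nat.sub_add_cancel hk']
      have h2 : (-1:ℝ)^k * (-1)^k = 1 := by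
        rw [← pow_add, ← two_mul, pow_mul]; norm_num
      calc (-1:ℝ)^(l-k) = (-1)^(l-k) * ((-1)^k * (-1)^k) := by rw [h2, mul_one]
      _ = (-1)^l * (-1)^k := by rw [← mul_assoc, h1]
    have hx : x^k * x^(l-k) = x^l := by rw [← pow_add, Nat.add_sub_cancel' hk']
    rw [neg_pow, hsign]
    have hne1 : ((l-k).factorial : ℝ) ≠ 0 := Nat.cast_ne_zero.mpr (Nat.factorial_ne_zero _)
    have hne2 : (l.factorial : ℝ) ≠ 0 := Nat.cast_ne_zero.mpr (Nat.factorial_ne_zero _)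
    field_simp
    linear_combination (L.coeff k) * hx * ((l.factorial:ℝ)) -
      (L.coeff k * x^l) * hfac
  have hcauchy := tsum_mul_tsum_eq_tsum_sum_antidiagonal_of_summable_norm hfs hgs
  rw [htsumf, htsumg] at hcauchy
  have hterm : ∀ l : ℕ,
      (∑ kl ∈ antidiagonal l, f kl.1 * g kl.2)
        = ((-1:ℝ)^S * ∏ q, poch (α q + 1) (n q)) *
          ((∏ q, poch (α q + (n q:ℝ) + 1) l / poch (α q + 1) l) * (-x) ^ l /
            (Nat.factorial l : ℝ)) := by
    intro l
    rw [hA l, hratio l, neg_pow x l]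
    field_simp
  constructor
  · have hs := summable_norm_sum_mul_antidiagonal_of_summable_norm hfs hgs
    refine (hs.mul_right (∏ q, poch (α q + 1) (n q))⁻¹).congr fun l => ?_
    rw [hterm l, Real.norm_eq_abs, abs_mul, abs_mul, abs_pow, abs_neg, abs_one, one_pow,
      one_mul, abs_of_pos hKpos, mul_comm, inv_mul_cancel_left₀ hKpos.ne']
  · rw [hcauchy, tsum_congr hterm, tsum_mul_left]
end
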